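/- For the perturbed walk with α > 1, there exists a constant C̃ with 0 < C̃ < 1 such that for all z ∈ K^c, P_z(T_z < ρ) ≤ C̃, where T_z is the first return time to z and ρ the first entrance time into the cones. -/
import Mathlib


open MeasureTheory Filter Asymptotics
open scoped Classical ENNReal

noncomputable section

/-- The four open cones: both coordinates nonzero. -/
def coneK : Set (ℤ × ℤ) := {z | z.1 ≠ 0 ∧ z.2 ≠ 0}

/-- The axes (complement of the cones). -/
def axesKc : Set (ℤ × ℤ) := {z | z.1 = 0 ∨ z.2 = 0}

/-- Nearest-neighbour adjacency on `ℤ²`. -/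
def adj (z w : ℤ × ℤ) : Prop := (w.1 - z.1).natAbs + (w.2 - z.2).natAbs = 1

/-- Maximum norm on `ℤ²`. -/
def onorm (z : ℤ × ℤ) : ℕ := max z.1.natAbs z.2.natAbs

/-- Transition probabilities of the perturbed walk: simple random walk on the cones and
at the origin; on the axes, at distance `i > 0` from the origin, probability `1/(4 i^α)`
to step outward or sideways and `1 - 3/(4 i^α)` to step toward the origin. -/
noncomputable def q (α : ℝ) (z w : ℤ × ℤ) : ℝ :=
  if z.2 = 0 ∧ z.1 ≠ 0 then
    (if w = (z.1 + Int.sign z.1, 0) ∨ w = (z.1, 1) ∨ w = (z.1, -1) then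
      1 / (4 * (z.1.natAbs : ℝ) ^ α)
    else if w = (z.1 - Int.sign z.1, 0) then
      1 - 3 / (4 * (z.1.natAbs : ℝ) ^ α)
    else 0)
  else if z.1 = 0 ∧ z.2 ≠ 0 then
    (if w = (0, z.2 + Int.sign z.2) ∨ w = (1, z.2) ∨ w = (-1, z.2) then
      1 / (4 * (z.2.natAbs : ℝ) ^ α)
    else if w = (0, z.2 - Int.sign z.2) then
      1 - 3 / (4 * (z.2.natAbs : ℝ) ^ α)
    else 0)
  else (if adj z w then 1 / 4 else 0)

/-- A Markov chain on `ℤ²` with transition kernel `q α`: a family of probability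
measures `P x` (the chain started at `x`) whose finite-dimensional distributions are
products of the transition probabilities. -/
structure PerturbedWalk (α : ℝ) (Ω : Type*) [MeasurableSpace Ω] where
  X : ℕ → Ω → ℤ × ℤ
  P : ℤ × ℤ → Measure Ω
  meas : ∀ n, Measurable (X n)
  prob : ∀ x, IsProbabilityMeasure (P x)
  fdd : ∀ (x : ℤ × ℤ) (n : ℕ) (path : ℕ → ℤ × ℤ), path 0 = x →
    (P x {ω | ∀ i ≤ n, X i ω = path i}).toReal
      = ∏ i ∈ Finset.range n, q α (path i) (path (i + 1))

/-- `n` is the first time (after `0`) at which the walk is in the cones `K`;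
i.e. `ρ = n` where `ρ` is the entrance time into `K`. -/
def entersConeAt {Ω : Type*} (X : ℕ → Ω → ℤ × ℤ) (n : ℕ) (ω : Ω) : Prop :=
  0 < n ∧ X n ω ∈ coneK ∧ ∀ m, 0 < m → m < n → X m ω ∉ coneK

/-- `n` is the first time (after `0`) at which the walk is on the axes `K^c`;
i.e. `η = n` where `η` is the entrance time into `K^c`. -/
def entersAxesAt {Ω : Type*} (X : ℕ → Ω → ℤ × ℤ) (n : ℕ) (ω : Ω) : Prop :=
  0 < n ∧ X n ω ∈ axesKc ∧ ∀ m, 0 < m → m < n → X m ω ∉ axesKc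

/-! ### Auxiliary lemmas -/

/-- The kernel is symmetric under swapping the two coordinates. -/
lemma q_swap (α : ℝ) (z w : ℤ × ℤ) : q α z.swap w.swap = q α z w := by
  rcases z with ⟨a, b⟩; rcases w with ⟨c, d⟩
  simp only [q, adj, Prod.swap_prod_mk, Prod.mk.injEq]
  rcases eq_or_ne a 0 with ha | ha <;> rcases eq_or_ne b 0 with hb | hb <;>
    simp [ha, hb, and_comm, Nat.add_comm]

lemma q_step_in (α : ℝ) (b : ℤ) (hb : b ≠ 0) :
    q α (b, 0) (b - b.sign, 0) = 1 - 3 / (4 * (b.natAbs : ℝ) ^ α) := by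
  have hs : b.sign ≠ 0 := by simpa using hb
  have h1 : ((b - b.sign, (0:ℤ)) : ℤ × ℤ) ≠ (b + b.sign, 0) := by
    simp only [ne_eq, Prod.mk.injEq, and_true]; omega
  have h2 : ((b - b.sign, (0:ℤ)) : ℤ × ℤ) ≠ (b, 1) := by
    simp [Prod.ext_iff]
  have h3 : ((b - b.sign, (0:ℤ)) : ℤ × ℤ) ≠ (b, -1) := by
    simp [Prod.ext_iff]
  show (if ((b:ℤ), (0:ℤ)).2 = 0 ∧ ((b:ℤ), (0:ℤ)).1 ≠ 0 then _ else _) = _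
  rw [if_pos ⟨rfl, hb⟩, if_neg (by push_neg; exact ⟨h1, h2, h3⟩), if_pos rfl]

lemma q_step_side (α : ℝ) (b : ℤ) (hb : b ≠ 0) :
    q α (b, 0) (b, 1) = 1 / (4 * (b.natAbs : ℝ) ^ α) := by
  show (if ((b:ℤ), (0:ℤ)).2 = 0 ∧ ((b:ℤ), (0:ℤ)).1 ≠ 0 then _ else _) = _
  rw [if_pos ⟨rfl, hb⟩, if_pos (Or.inr (Or.inl rfl))]

lemma q_origin (α : ℝ) : q α (0, 0) (1, 0) = 1 / 4 := by
  simp [q, adj]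

lemma exp_neg_two_le {x : ℝ} (h0 : 0 ≤ x) (h2 : x ≤ 1/2) : Real.exp (-(2*x)) ≤ 1 - x := by
  have h1 := Real.add_one_le_exp (2*x)
  have h3 := Real.exp_pos (2*x)
  rw [Real.exp_neg]
  rw [inv_le_iff_one_le_mul₀ h3]
  nlinarith [Real.exp_pos (2*x)]

lemma prod_one_sub_ge {ι : Type*} (s : Finset ι) (x : ι → ℝ)
    (h : ∀ i ∈ s, 0 ≤ x i ∧ x i ≤ 1/2) :
    Real.exp (-(2 * ∑ i ∈ s, x i)) ≤ ∏ i ∈ s, (1 - x i) := by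
  have : Real.exp (-(2 * ∑ i ∈ s, x i)) = ∏ i ∈ s, Real.exp (-(2 * x i)) := by
    rw [← Real.exp_sum]
    congr 1
    rw [Finset.mul_sum, ← Finset.sum_neg_distrib]
  rw [this]
  exact Finset.prod_le_prod (fun i _ => (Real.exp_pos _).le)
    (fun i hi => exp_neg_two_le (h i hi).1 (h i hi).2)

noncomputable def Sval (α : ℝ) : ℝ := ∑' n : ℕ, 1 / (n : ℝ) ^ α

lemma Sval_nonneg (α : ℝ) : 0 ≤ Sval α :=
  tsum_nonneg fun n => by positivity

/-- main estimate used for axis sites -/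
lemma prod_lower {α : ℝ} (hα : 1 < α) (A : ℕ) :
    (1/16 : ℝ) * Real.exp (-(3/2) * Sval α) ≤
      (1/4) * ∏ i ∈ Finset.range (A - 1), (1 - 3 / (4 * ((A - i : ℕ) : ℝ) ^ α)) := by
  have hsummable : Summable (fun n : ℕ => 1 / (n : ℝ) ^ α) :=
    Real.summable_one_div_nat_rpow.mpr hα
  have hjα : ∀ j : ℕ, 2 ≤ j → (2 : ℝ) ≤ (j : ℝ) ^ α := by
    intro j hj
    have h1 : ((j : ℝ)) ^ (1:ℝ) ≤ (j : ℝ) ^ α :=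
      Real.rpow_le_rpow_of_exponent_le (by exact_mod_cast Nat.one_le_iff_ne_zero.mpr (by omega)) hα.le
    rw [Real.rpow_one] at h1
    have : (2 : ℝ) ≤ (j : ℝ) := by exact_mod_cast hj
    linarith
  have hbound : ∀ i ∈ Finset.range (A - 1),
      0 ≤ 3 / (4 * ((A - i : ℕ) : ℝ) ^ α) ∧ 3 / (4 * ((A - i : ℕ) : ℝ) ^ α) ≤ 1/2 := by
    intro i hi
    rw [Finset.mem_range] at hi
    have h2 : 2 ≤ A - i := by omega
    have := hjα (A - i) h2
    constructor
    · positivity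
    · rw [div_le_iff₀ (by nlinarith)]
      nlinarith
  have hprod := prod_one_sub_ge (Finset.range (A - 1))
    (fun i => 3 / (4 * ((A - i : ℕ) : ℝ) ^ α)) hbound
  have hsum : ∑ i ∈ Finset.range (A - 1), 3 / (4 * ((A - i : ℕ) : ℝ) ^ α) ≤ (3/4) * Sval α := by
    have heq : ∀ i : ℕ, 3 / (4 * ((A - i : ℕ) : ℝ) ^ α) = (3/4) * (1 / ((A - i : ℕ) : ℝ) ^ α) := by
      intro i; rw [div_mul_eq_div_div, div_div]; ring_nf
    calc ∑ i ∈ Finset.range (A - 1), 3 / (4 * ((A - i : ℕ) : ℝ) ^ α)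
        = (3/4) * ∑ i ∈ Finset.range (A - 1), 1 / ((A - i : ℕ) : ℝ) ^ α := by
          rw [Finset.mul_sum]; exact Finset.sum_congr rfl fun i _ => heq i
      _ ≤ (3/4) * Sval α := by
          have hinj : ∀ i ∈ Finset.range (A-1), ∀ j ∈ Finset.range (A-1),
              A - i = A - j → i = j := by
            intro i hi j hj hij
            rw [Finset.mem_range] at hi hj
            omega
          have himg : ∑ i ∈ Finset.range (A - 1), 1 / ((A - i : ℕ) : ℝ) ^ α
              = ∑ j ∈ (Finset.range (A-1)).image (fun i => A - i), 1 / ((j : ℕ) : ℝ) ^ α := by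
            rw [Finset.sum_image hinj]
          rw [himg]
          have := Summable.sum_le_tsum ((Finset.range (A-1)).image (fun i => A - i))
            (fun j _ => by positivity) hsummable
          have h34 : (0:ℝ) ≤ 3/4 := by norm_num
          exact mul_le_mul_of_nonneg_left this h34
  have hmono : Real.exp (-(3/2) * Sval α)
      ≤ Real.exp (-(2 * ∑ i ∈ Finset.range (A - 1), 3 / (4 * ((A - i : ℕ) : ℝ) ^ α))) := by
    apply Real.exp_le_exp.mpr
    linarith
  have hE := Real.exp_pos (-(3/2) * Sval α)
  calc (1/16 : ℝ) * Real.exp (-(3/2) * Sval α)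
      ≤ (1/4) * Real.exp (-(3/2) * Sval α) := by nlinarith
    _ ≤ (1/4) * ∏ i ∈ Finset.range (A - 1), (1 - 3 / (4 * ((A - i : ℕ) : ℝ) ^ α)) := by
        have := le_trans hmono hprod
        linarith

/-- A concrete escape path from an axis site `(a,0)` into the cone. -/
lemma axis_path (α : ℝ) (a : ℤ) (ha : a ≠ 0) :
    ∃ path : ℕ → ℤ × ℤ, path 0 = (a, 0) ∧ path a.natAbs ∈ coneK ∧
      (∀ i, 0 < i → i ≤ a.natAbs → path i ≠ (a, 0)) ∧
      ∏ i ∈ Finset.range a.natAbs, q α (path i) (path (i+1))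
        = (1/4) * ∏ i ∈ Finset.range (a.natAbs - 1),
            (1 - 3 / (4 * ((a.natAbs - i : ℕ) : ℝ) ^ α)) := by
  set A := a.natAbs with hAdef
  have hA : 0 < A := Int.natAbs_pos.mpr ha
  set s := a.sign with hs
  have hsne : s ≠ 0 := by simp [hs, ha]
  -- key integer facts
  have key : ∀ i : ℕ, i < A → (a - i * s) ≠ 0 ∧ (a - i * s).natAbs = A - i ∧
      (a - i * s).sign = s := by
    intro i hi
    rcases ha.lt_or_gt with h | h
    · have hsv : s = -1 := Int.sign_eq_neg_one_iff_neg.mpr h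
      rw [hsv]
      have he : a - (i : ℤ) * (-1) = a + i := by ring
      rw [he]
      have hneg : a + i < 0 := by omega
      refine ⟨by omega, by omega, Int.sign_eq_neg_one_iff_neg.mpr hneg⟩
    · have hsv : s = 1 := Int.sign_eq_one_iff_pos.mpr h
      rw [hsv]
      have he : a - (i : ℤ) * 1 = a - i := by ring
      rw [he]
      have hpos : 0 < a - i := by omega
      refine ⟨by omega, by omega, Int.sign_eq_one_iff_pos.mpr hpos⟩
  have hlast : a - ((A - 1 : ℕ) : ℤ) * s = s := by
    rcases ha.lt_or_gt with h | h
    · have hsv : s = -1 := Int.sign_eq_neg_one_iff_neg.mpr h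
      rw [hsv]; omega
    · have hsv : s = 1 := Int.sign_eq_one_iff_pos.mpr h
      rw [hsv]; omega
  refine ⟨fun i => if i < A then (a - i * s, 0) else (s, 1), ?_, ?_, ?_, ?_⟩
  · simp [hA]
  · simp only [lt_irrefl, if_neg (lt_irrefl A)]
    exact ⟨hsne, one_ne_zero⟩
  · intro i hi0 hiA
    rcases lt_or_ge i A with h | h
    · simp only [if_pos h, ne_eq, Prod.mk.injEq, and_true]
      intro hcontr
      have : (i : ℤ) * s = 0 := by omega
      rcases mul_eq_zero.mp this with h' | h'
      · omega
      · exact hsne h'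
    · simp only [if_neg (not_lt.mpr h), ne_eq, Prod.mk.injEq, not_and]
      intro _; exact one_ne_zero
  · -- product computation
    set f : ℕ → ℤ × ℤ := fun i => if i < A then (a - i * s, 0) else (s, 1) with hf
    have hsplit : ∏ i ∈ Finset.range A, q α (f i) (f (i+1))
        = (∏ i ∈ Finset.range (A-1), q α (f i) (f (i+1))) * q α (f (A-1)) (f (A-1+1)) := by
      conv_lhs => rw [show A = (A-1)+1 from by omega]
      rw [Finset.prod_range_succ]
    have hA1 : A - 1 + 1 = A := by omega
    rw [hsplit, hA1]
    have hfin : f (A - 1) = ((s : ℤ), (0 : ℤ)) := by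
      have h1 : A - 1 < A := by omega
      simp only [hf, if_pos h1, hlast]
    have hfin2 : f A = ((s : ℤ), (1 : ℤ)) := by
      simp only [hf, if_neg (lt_irrefl A)]
    have hqlast : q α ((s : ℤ), (0 : ℤ)) ((s : ℤ), (1 : ℤ)) = 1/4 := by
      rw [q_step_side α s hsne]
      have : s.natAbs = 1 := by
        rcases ha.lt_or_gt with h | h
        · have hsv : s = -1 := Int.sign_eq_neg_one_iff_neg.mpr h
          omega
        · have hsv : s = 1 := Int.sign_eq_one_iff_pos.mpr h
          omega
      rw [this]
      norm_num [Real.one_rpow]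
    rw [hfin, hfin2, hqlast, mul_comm]
    congr 1
    apply Finset.prod_congr rfl
    intro i hi
    rw [Finset.mem_range] at hi
    have hi1 : i < A := by omega
    have hi2 : i + 1 < A := by omega
    simp only [hf, if_pos hi1, if_pos hi2]
    obtain ⟨hne0, hnab, hsgn⟩ := key i hi1
    have hstep : a - ((i : ℕ) + 1 : ℕ) * s = (a - i * s) - (a - i * s).sign := by
      rw [hsgn]; push_cast; ring
    rw [show ((i+1 : ℕ) : ℤ) = ((i : ℕ) + 1 : ℕ) from by push_cast; ring, hstep,
      q_step_in α (a - i * s) hne0, hnab]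

/-- Bound the return probability by one minus the probability of a cylinder escaping
into the cone and avoiding `z`. -/
lemma cylinder_bound {α : ℝ} {Ω : Type*} [MeasurableSpace Ω] (W : PerturbedWalk α Ω)
    (z : ℤ × ℤ) (N : ℕ) (hN : 0 < N) (path : ℕ → ℤ × ℤ) (h0 : path 0 = z)
    (hcone : path N ∈ coneK) (hne : ∀ i, 0 < i → i ≤ N → path i ≠ z) :
    (W.P z {ω | ∃ n, 0 < n ∧ W.X n ω = z ∧
        ∀ m, 0 < m → m ≤ n → W.X m ω ∈ axesKc}).toReal
      ≤ 1 - ∏ i ∈ Finset.range N, q α (path i) (path (i + 1)) := by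
  haveI := W.prob z
  set F : Set Ω := {ω | ∀ i ≤ N, W.X i ω = path i} with hFdef
  have hmF : MeasurableSet F := by
    have hFeq : F = ⋂ i ∈ Finset.range (N+1), (W.X i) ⁻¹' {path i} := by
      ext ω; simp [hFdef, Nat.lt_succ_iff]
    rw [hFeq]
    exact Finset.measurableSet_biInter _ fun i _ => (W.meas i) (measurableSet_singleton _)
  have hsub : {ω | ∃ n, 0 < n ∧ W.X n ω = z ∧
      ∀ m, 0 < m → m ≤ n → W.X m ω ∈ axesKc} ⊆ Fᶜ := by
    rintro ω ⟨n, hn, hXn, hax⟩ hFω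
    rcases le_or_gt n N with h | h
    · exact hne n hn h ((hFω n h).symm.trans hXn)
    · have h1 : W.X N ω ∈ axesKc := hax N hN h.le
      rw [hFω N le_rfl] at h1
      rcases h1 with h1 | h1
      · exact hcone.1 h1
      · exact hcone.2 h1
  have hle : W.P z {ω | ∃ n, 0 < n ∧ W.X n ω = z ∧
      ∀ m, 0 < m → m ≤ n → W.X m ω ∈ axesKc} ≤ W.P z Fᶜ := measure_mono hsub
  have hfdd := W.fdd z N path h0
  calc (W.P z {ω | ∃ n, 0 < n ∧ W.X n ω = z ∧
        ∀ m, 0 < m → m ≤ n → W.X m ω ∈ axesKc}).toReal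
      ≤ (W.P z Fᶜ).toReal := ENNReal.toReal_mono (measure_ne_top _ _) hle
    _ = 1 - (W.P z F).toReal := by
        rw [prob_compl_eq_one_sub hmF,
          ENNReal.toReal_sub_of_le prob_le_one ENNReal.one_ne_top, ENNReal.toReal_one]
    _ = 1 - ∏ i ∈ Finset.range N, q α (path i) (path (i + 1)) := by rw [hfdd]

/-- For `α > 1`, the probability of returning to the starting axis site before entering
the cones is bounded away from `1`, uniformly: there is `C̃ ∈ (0,1)` with
`P_z(T_z < ρ) ≤ C̃` for all `z ∈ K^c`. -/
theorem return_before_exit_bounded (α : ℝ) (hα : 1 < α) {Ω : Type*} [MeasurableSpace Ω]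
    (W : PerturbedWalk α Ω) :
    ∃ C : ℝ, 0 < C ∧ C < 1 ∧ ∀ z ∈ axesKc,
      (W.P z {ω | ∃ n, 0 < n ∧ W.X n ω = z ∧
        ∀ m, 0 < m → m ≤ n → W.X m ω ∈ axesKc}).toReal ≤ C := by
  set c : ℝ := (1/16) * Real.exp (-(3/2) * Sval α) with hc
  have hcpos : 0 < c := by positivity
  have hexp1 : Real.exp (-(3/2) * Sval α) ≤ 1 := by
    apply Real.exp_le_one_iff.mpr
    have := Sval_nonneg α
    nlinarith
  have hclt : c ≤ 1/16 := by nlinarith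
  refine ⟨1 - c, by linarith, by linarith, ?_⟩
  rintro ⟨a, b⟩ hz
  rcases eq_or_ne a 0 with rfl | ha
  · rcases eq_or_ne b 0 with rfl | hb
    · -- origin
      set path : ℕ → ℤ × ℤ := fun i => if i = 0 then (0,0) else if i = 1 then (1,0) else (1,1)
        with hpath
      have h0 : path 0 = ((0:ℤ), (0:ℤ)) := rfl
      have hcone : path 2 ∈ coneK := ⟨one_ne_zero, one_ne_zero⟩
      have hne : ∀ i, 0 < i → i ≤ 2 → path i ≠ ((0:ℤ), (0:ℤ)) := by
        intro i hi0 hi2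
        interval_cases i <;> simp [hpath]
      have hkey := cylinder_bound W ((0:ℤ), (0:ℤ)) 2 (by norm_num) path h0 hcone hne
      have hprodval : ∏ i ∈ Finset.range 2, q α (path i) (path (i + 1)) = 1/16 := by
        rw [Finset.prod_range_succ, Finset.prod_range_one]
        have e1 : path 0 = ((0:ℤ), (0:ℤ)) := rfl
        have e2 : path 1 = ((1:ℤ), (0:ℤ)) := rfl
        have e3 : path 2 = ((1:ℤ), (1:ℤ)) := rfl
        rw [e1, e2, e3, q_origin, q_step_side α 1 one_ne_zero]
        norm_num [Real.one_rpow]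
      rw [hprodval] at hkey
      have : c ≤ 1/16 := hclt
      linarith
    · -- z = (0, b), use swapped axis path
      obtain ⟨path, h0, hcone, hne, hprod⟩ := axis_path α b hb
      set path' : ℕ → ℤ × ℤ := fun i => (path i).swap with hpath'
      have h0' : path' 0 = ((0:ℤ), b) := by rw [hpath']; simp [h0]
      have hcone' : path' b.natAbs ∈ coneK := ⟨hcone.2, hcone.1⟩
      have hne' : ∀ i, 0 < i → i ≤ b.natAbs → path' i ≠ ((0:ℤ), b) := by
        intro i hi0 hiN hcontr
        apply hne i hi0 hiN
        have := congrArg Prod.swap hcontr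
        simpa [hpath'] using this
      have hN : 0 < b.natAbs := Int.natAbs_pos.mpr hb
      have hkey := cylinder_bound W ((0:ℤ), b) b.natAbs hN path' h0' hcone' hne'
      have hprod' : ∏ i ∈ Finset.range b.natAbs, q α (path' i) (path' (i + 1))
          = ∏ i ∈ Finset.range b.natAbs, q α (path i) (path (i + 1)) :=
        Finset.prod_congr rfl fun i _ => q_swap α (path i) (path (i+1))
      rw [hprod', hprod] at hkey
      have hlow := prod_lower hα b.natAbs
      linarith
  · -- z = (a, 0) with a ≠ 0 (b = 0 from membership)
    have hb : b = 0 := by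
      rcases hz with h | h
      · exact absurd h ha
      · exact h
    subst hb
    obtain ⟨path, h0, hcone, hne, hprod⟩ := axis_path α a ha
    have hN : 0 < a.natAbs := Int.natAbs_pos.mpr ha
    have hkey := cylinder_bound W (a, (0:ℤ)) a.natAbs hN path h0 hcone hne
    rw [hprod] at hkey
    have hlow := prod_lower hα a.natAbs
    linarith

end
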